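/- Exact token retrieval (regularized form of Theorem 1): let h_1, …, h_t be pairwise distinct vectors in ℝ^d. For every index j ∈ {1, …, t}, as σ → 0⁺ the Gaussian-regularized readout (4πσ)^{d/2} ∫_{ℝ^d} S(θ) · conj(w_j(θ)) · e^{−σ‖θ‖²} dθ (a vector in ℂ^d, integrated componentwise) converges to h_j (viewed in ℂ^d via the canonical inclusion ℝ^d ↪ ℂ^d). -/

import Mathlib

open MeasureTheory Real Filter RealInnerProductSpace

/-- The derivative characteristic summary `S(θ) = (i/t) ∑ₖ hₖ e^{i⟨θ,hₖ⟩}` (componentwise). -/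
noncomputable def seqSummary {d t : ℕ} (h : Fin t → EuclideanSpace ℝ (Fin d))
    (θ : EuclideanSpace ℝ (Fin d)) : Fin d → ℂ :=
  fun l => (Complex.I / (t : ℂ)) *
    ∑ k, (h k l : ℂ) * Complex.exp (Complex.I * (⟪θ, h k⟫ : ℝ))

/-- The spectral query `w_j(θ) = (i t/(2π)^d) e^{i⟨θ,h_j⟩}`. -/
noncomputable def spectralQuery {d t : ℕ} (h : Fin t → EuclideanSpace ℝ (Fin d))
    (j : Fin t) (θ : EuclideanSpace ℝ (Fin d)) : ℂ :=
  (Complex.I * (t : ℂ) / ((2 * Real.pi) ^ d : ℝ)) *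
    Complex.exp (Complex.I * (⟪θ, h j⟫ : ℝ))

lemma integrand_eq {d t : ℕ} (ht : 0 < t) (h : Fin t → EuclideanSpace ℝ (Fin d))
    (j : Fin t) (σ : ℝ) (θ : EuclideanSpace ℝ (Fin d)) :
    (fun l : Fin d =>
        seqSummary h θ l * (starRingEnd ℂ) (spectralQuery h j θ) *
          (Real.exp (-σ * ‖θ‖ ^ 2) : ℂ)) =
      ∑ k, Complex.exp (-(σ : ℂ) * (‖θ‖ : ℂ) ^ 2 +
          Complex.I * ((⟪h k - h j, θ⟫ : ℝ) : ℂ)) •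
        (fun l : Fin d => ((((2 * Real.pi) ^ d : ℝ) : ℂ))⁻¹ * (h k l : ℂ)) := by
  funext l
  have htC : (t : ℂ) ≠ 0 := Nat.cast_ne_zero.mpr ht.ne'
  have hPC : ((((2 * Real.pi) ^ d : ℝ)) : ℂ) ≠ 0 := by
    have : (0 : ℝ) < (2 * Real.pi) ^ d := pow_pos (by positivity) d
    exact_mod_cast this.ne'
  simp only [seqSummary, spectralQuery, Finset.sum_apply, Pi.smul_apply, smul_eq_mul,
    map_mul, map_div₀, Complex.conj_I, Complex.conj_ofReal, map_natCast, ← Complex.exp_conj]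
  rw [Finset.mul_sum, Finset.sum_mul, Finset.sum_mul]
  refine Finset.sum_congr rfl fun k _ => ?_
  have hinner : (⟪h k - h j, θ⟫ : ℝ) = ⟪θ, h k⟫ - ⟪θ, h j⟫ := by
    rw [inner_sub_left, real_inner_comm (h k) θ, real_inner_comm (h j) θ]
  rw [hinner]
  have hsplit : (-(σ : ℂ) * (‖θ‖ : ℂ) ^ 2 +
      Complex.I * (((⟪θ, h k⟫ - ⟪θ, h j⟫ : ℝ)) : ℂ)) =
      (Complex.I * (⟪θ, h k⟫ : ℝ)) + ((starRingEnd ℂ) (Complex.I * (⟪θ, h j⟫ : ℝ)) +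
        ((-σ * ‖θ‖ ^ 2 : ℝ) : ℂ)) := by
    simp only [map_mul, Complex.conj_I, Complex.conj_ofReal]
    push_cast
    ring
  rw [hsplit, Complex.exp_add, Complex.exp_add, ← Complex.ofReal_exp]
  have hπ : (2 * (Real.pi : ℂ)) ^ d ≠ 0 :=
    pow_ne_zero _ (by simp [Real.pi_ne_zero, Complex.ofReal_ne_zero])
  have hP2 : ((((2 * Real.pi) ^ d : ℝ)) : ℂ) = (2 * (Real.pi : ℂ)) ^ d := by push_cast; ring
  rw [hP2]
  field_simp [htC, hπ]
  ring_nf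
  simp only [Complex.I_sq]
  ring
  simp only [map_mul, Complex.conj_I, Complex.conj_ofReal, neg_mul]

lemma integral_formula {d t : ℕ} (ht : 0 < t) (h : Fin t → EuclideanSpace ℝ (Fin d))
    (j : Fin t) (σ : ℝ) (hσ : 0 < σ) :
    (((4 * Real.pi * σ) ^ ((d : ℝ) / 2) : ℝ) •
        ∫ θ : EuclideanSpace ℝ (Fin d),
          (fun l : Fin d =>
            seqSummary h θ l * (starRingEnd ℂ) (spectralQuery h j θ) *
              (Real.exp (-σ * ‖θ‖ ^ 2) : ℂ))) =
      fun l : Fin d => ∑ k, (h k l : ℂ) *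
        (Real.exp (-‖h k - h j‖ ^ 2 / (4 * σ)) : ℂ) := by
  have hσC : (0 : ℝ) < ((σ : ℂ)).re := by simpa using hσ
  have hint : (fun θ : EuclideanSpace ℝ (Fin d) =>
      (fun l : Fin d =>
        seqSummary h θ l * (starRingEnd ℂ) (spectralQuery h j θ) *
          (Real.exp (-σ * ‖θ‖ ^ 2) : ℂ))) =
      fun θ => ∑ k, Complex.exp (-(σ : ℂ) * (‖θ‖ : ℂ) ^ 2 +
          Complex.I * ((⟪h k - h j, θ⟫ : ℝ) : ℂ)) •
        (fun l : Fin d => ((((2 * Real.pi) ^ d : ℝ) : ℂ))⁻¹ * (h k l : ℂ)) :=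
    funext (integrand_eq ht h j σ)
  rw [hint]
  rw [integral_finset_sum _ (fun k _ =>
    (GaussianFourier.integrable_cexp_neg_mul_sq_norm_add hσC Complex.I (h k - h j)).smul_const _)]
  have hgauss : ∀ k : Fin t,
      (∫ θ : EuclideanSpace ℝ (Fin d), Complex.exp (-(σ : ℂ) * (‖θ‖ : ℂ) ^ 2 +
        Complex.I * ((⟪h k - h j, θ⟫ : ℝ) : ℂ))) =
      ((Real.pi : ℂ) / σ) ^ ((d : ℂ) / 2) *
        Complex.exp (Complex.I ^ 2 * (‖h k - h j‖ : ℂ) ^ 2 / (4 * σ)) := by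
    intro k
    have := GaussianFourier.integral_cexp_neg_mul_sq_norm_add (V := EuclideanSpace ℝ (Fin d))
      hσC Complex.I (h k - h j)
    simpa using this
  simp only [integral_smul_const, hgauss]
  funext l
  simp only [Finset.smul_sum, Finset.sum_apply, Pi.smul_apply, smul_eq_mul,
    Complex.real_smul]
  refine Finset.sum_congr rfl fun k _ => ?_
  have hexp : Complex.exp (Complex.I ^ 2 * (‖h k - h j‖ : ℂ) ^ 2 / (4 * σ)) =
      ((Real.exp (-‖h k - h j‖ ^ 2 / (4 * σ)) : ℝ) : ℂ) := by
    rw [Complex.ofReal_exp]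
    congr 1
    rw [Complex.I_sq]
    push_cast
    ring
  have hcpow : (((Real.pi : ℂ)) / σ) ^ ((d : ℂ) / 2) =
      (((Real.pi / σ) ^ ((d : ℝ) / 2) : ℝ) : ℂ) := by
    rw [Complex.ofReal_cpow (le_of_lt (div_pos Real.pi_pos hσ))]
    push_cast
    ring_nf
  have hconst : (4 * Real.pi * σ) ^ ((d : ℝ) / 2) * (Real.pi / σ) ^ ((d : ℝ) / 2) *
      ((2 * Real.pi) ^ d)⁻¹ = 1 := by
    rw [← Real.mul_rpow (by positivity) (by positivity)]
    have h1 : 4 * Real.pi * σ * (Real.pi / σ) = (2 * Real.pi) ^ 2 := by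
      field_simp
      ring
    rw [h1, ← Real.rpow_natCast (2 * Real.pi) 2, ← Real.rpow_mul (by positivity),
      ← Real.rpow_natCast (2 * Real.pi) d]
    have he : ((2 : ℕ) : ℝ) * ((d : ℝ) / 2) = ((d : ℕ) : ℝ) := by push_cast; ring
    rw [he]
    exact mul_inv_cancel₀ (Real.rpow_pos_of_pos (by positivity) _).ne'
  rw [hexp, hcpow]
  have hC : (((4 * Real.pi * σ) ^ ((d : ℝ) / 2) : ℝ) : ℂ) *
      (((Real.pi / σ) ^ ((d : ℝ) / 2) : ℝ) : ℂ) *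
      (((((2 * Real.pi) ^ d : ℝ))) : ℂ)⁻¹ = 1 := by
    rw [← Complex.ofReal_inv, ← Complex.ofReal_mul, ← Complex.ofReal_mul]
    norm_cast
  linear_combination ((h k l : ℂ) *
    ((Real.exp (-‖h k - h j‖ ^ 2 / (4 * σ)) : ℝ) : ℂ)) * hC

/-- **Exact token retrieval (regularized form of Theorem 1).**
For pairwise distinct `h₁, …, h_t ∈ ℝ^d` and every index `j`, as `σ → 0⁺` the
Gaussian-regularized readout `(4πσ)^{d/2} ∫ S(θ) * conj (w_j θ) * e^{−σ‖θ‖²} dθ`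
(componentwise in `ℂ^d`) converges to `h_j`. -/
theorem exact_token_retrieval
    (d t : ℕ) (ht : 0 < t) (h : Fin t → EuclideanSpace ℝ (Fin d))
    (hdist : Function.Injective h) (j : Fin t) :
    Tendsto
      (fun σ : ℝ =>
        ((4 * Real.pi * σ) ^ ((d : ℝ) / 2) : ℝ) •
          ∫ θ : EuclideanSpace ℝ (Fin d),
            (fun l : Fin d =>
              seqSummary h θ l * (starRingEnd ℂ) (spectralQuery h j θ) *
                (Real.exp (-σ * ‖θ‖ ^ 2) : ℂ)))
      (nhdsWithin 0 (Set.Ioi 0))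
      (nhds (fun l : Fin d => (h j l : ℂ))) := by
  have heq : ∀ᶠ σ : ℝ in nhdsWithin 0 (Set.Ioi 0),
      (fun l : Fin d => ∑ k, (h k l : ℂ) *
        (Real.exp (-‖h k - h j‖ ^ 2 / (4 * σ)) : ℂ)) =
      ((4 * Real.pi * σ) ^ ((d : ℝ) / 2) : ℝ) •
        ∫ θ : EuclideanSpace ℝ (Fin d),
          (fun l : Fin d =>
            seqSummary h θ l * (starRingEnd ℂ) (spectralQuery h j θ) *
              (Real.exp (-σ * ‖θ‖ ^ 2) : ℂ)) := by
    filter_upwards [self_mem_nhdsWithin] with σ hσ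
    exact (integral_formula ht h j σ hσ).symm
  refine Tendsto.congr' heq ?_
  rw [tendsto_pi_nhds]
  intro l
  have hterm : ∀ k : Fin t, Tendsto
      (fun σ : ℝ => (h k l : ℂ) * (Real.exp (-‖h k - h j‖ ^ 2 / (4 * σ)) : ℂ))
      (nhdsWithin 0 (Set.Ioi 0))
      (nhds (if k = j then (h j l : ℂ) else 0)) := by
    intro k
    by_cases hk : k = j
    · subst hk
      have hfun : (fun σ : ℝ => (h k l : ℂ) *
          (Real.exp (-‖h k - h k‖ ^ 2 / (4 * σ)) : ℂ)) = fun _ => (h k l : ℂ) := by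
        funext σ; simp
      rw [if_pos rfl, hfun]
      exact tendsto_const_nhds
    · rw [if_neg hk]
      have hne : h k - h j ≠ 0 := sub_ne_zero.mpr (fun hc => hk (hdist hc))
      have hpos : (0 : ℝ) < ‖h k - h j‖ ^ 2 := pow_pos (norm_pos_iff.mpr hne) 2
      have hbot : Tendsto (fun σ : ℝ => -‖h k - h j‖ ^ 2 / (4 * σ))
          (nhdsWithin 0 (Set.Ioi 0)) atBot := by
        have h4 : Tendsto (fun σ : ℝ => 4 * σ) (nhdsWithin 0 (Set.Ioi 0))
            (nhdsWithin 0 (Set.Ioi 0)) := by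
          refine tendsto_nhdsWithin_of_tendsto_nhds_of_eventually_within _ ?_ ?_
          · have h0 : Tendsto (fun σ : ℝ => 4 * σ) (nhds 0) (nhds 0) := by
              simpa using (continuous_mul_left (4 : ℝ)).tendsto (0 : ℝ)
            exact h0.mono_left nhdsWithin_le_nhds
          · filter_upwards [self_mem_nhdsWithin] with σ hσ
            exact mul_pos (by norm_num : (0 : ℝ) < 4) hσ
        have hinv : Tendsto (fun σ : ℝ => (4 * σ)⁻¹) (nhdsWithin 0 (Set.Ioi 0)) atTop :=
          tendsto_inv_nhdsGT_zero.comp h4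
        have hmul : Tendsto (fun σ : ℝ => ‖h k - h j‖ ^ 2 * (4 * σ)⁻¹)
            (nhdsWithin 0 (Set.Ioi 0)) atTop := hinv.const_mul_atTop hpos
        have hneg : Tendsto (fun σ : ℝ => -(‖h k - h j‖ ^ 2 * (4 * σ)⁻¹))
            (nhdsWithin 0 (Set.Ioi 0)) atBot := tendsto_neg_atBot_iff.mpr hmul
        refine hneg.congr fun σ => ?_
        rw [neg_div, div_eq_mul_inv]
      have hexp : Tendsto (fun σ : ℝ => Real.exp (-‖h k - h j‖ ^ 2 / (4 * σ)))
          (nhdsWithin 0 (Set.Ioi 0)) (nhds 0) :=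
        Real.tendsto_exp_atBot.comp hbot
      have hC : Tendsto (fun σ : ℝ => ((Real.exp (-‖h k - h j‖ ^ 2 / (4 * σ)) : ℝ) : ℂ))
          (nhdsWithin 0 (Set.Ioi 0)) (nhds 0) := by
        have hcomp := (Complex.continuous_ofReal.tendsto 0).comp hexp
        simpa only [Function.comp_def, Complex.ofReal_zero] using hcomp
      simpa only [mul_zero] using hC.const_mul (h k l : ℂ)
  have hsum := tendsto_finset_sum Finset.univ (fun k _ => hterm k)
  simpa [Finset.sum_ite_eq', Finset.mem_univ] using hsum
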